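/- Let n = 2r be even with r ≥ 4. For each divisor d of n with 2n | d² and each integer ℓ with ℓ² ≡ 1 (mod 2d²/n), the ℤ/nℤ-indexed 0-1 matrix B̃(d,ℓ) defined by B̃(d,ℓ)_{a,b} = 1 iff n | d·a and b ≡ aℓ (mod d) commutes with T̃, where T̃_{a,b} = δ_{a,b}·exp(πi a²/n). -/

import Mathlib

open Complex

/-- The 0-1 matrix `B̃(d,ℓ)` indexed by `ℤ/nℤ`. -/
noncomputable def Btilde (n d : ℕ) (ℓ : ℤ) : Matrix (ZMod n) (ZMod n) ℂ :=
  fun a b => if n ∣ d * a.val ∧ (d : ℤ) ∣ ((b.val : ℤ) - (a.val : ℤ) * ℓ) then 1 else 0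

/-- The diagonal matrix `T̃`, with `T̃_{a,a} = exp(πi a²/n)`. -/
noncomputable def Ttilde (n : ℕ) : Matrix (ZMod n) (ZMod n) ℂ :=
  fun a b => if a = b then Complex.exp (Real.pi * Complex.I * ((a.val : ℂ) ^ 2) / n) else 0

/-- For even `n = 2r`, `r ≥ 4`: if `d ∣ n`, `2n ∣ d²` and `ℓ² ≡ 1 (mod 2d²/n)`,
then `B̃(d,ℓ)` commutes with `T̃`. -/
theorem Btilde_commute_Ttilde (r n d : ℕ) [NeZero n] (hr : 4 ≤ r) (hn : n = 2 * r)
    (hd : d ∣ n) (hnd : 2 * n ∣ d ^ 2) (ℓ : ℤ)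
    (hl : ℓ ^ 2 ≡ 1 [ZMOD ((2 * d ^ 2 / n : ℕ) : ℤ)]) :
    Btilde n d ℓ * Ttilde n = Ttilde n * Btilde n d ℓ := by
  have hn0 : (n : ℤ) ≠ 0 := Int.natCast_ne_zero.mpr (NeZero.ne n)
  have hnC : (n : ℂ) ≠ 0 := Nat.cast_ne_zero.mpr (NeZero.ne n)
  -- n ∣ 2 d²
  have hndvd : n ∣ 2 * d ^ 2 := (dvd_mul_left n 2).trans (hnd.trans (dvd_mul_left _ 2))
  have hT : Ttilde n = Matrix.diagonal
      (fun a : ZMod n => Complex.exp (Real.pi * Complex.I * ((a.val : ℂ) ^ 2) / n)) := by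
    ext a b
    simp only [Ttilde, Matrix.diagonal_apply]
  have key : ∀ a b : ZMod n, n ∣ d * a.val → (d : ℤ) ∣ ((b.val : ℤ) - (a.val : ℤ) * ℓ) →
      Complex.exp (Real.pi * Complex.I * ((b.val : ℂ) ^ 2) / n)
        = Complex.exp (Real.pi * Complex.I * ((a.val : ℂ) ^ 2) / n) := by
    intro a b h1 h2
    set A : ℤ := (a.val : ℤ) with hA
    set B : ℤ := (b.val : ℤ) with hB
    have h1' : (n : ℤ) ∣ (d : ℤ) * A := by rw [hA]; exact_mod_cast h1
    obtain ⟨t, ht⟩ := h1'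
    obtain ⟨k, hk⟩ := h2
    have hlm : ((2 * d ^ 2 / n : ℕ) : ℤ) ∣ ℓ ^ 2 - 1 := by
      simpa [neg_sub] using (Int.ModEq.dvd hl).neg_right
    obtain ⟨m, hm⟩ := hlm
    have hs' : (2 * (n : ℤ)) ∣ (d : ℤ) ^ 2 := by exact_mod_cast Int.natCast_dvd_natCast.mpr hnd
    obtain ⟨s, hs⟩ := hs'
    have hMn : ((2 * d ^ 2 / n : ℕ) : ℤ) * n = 2 * (d : ℤ) ^ 2 := by
      have := Nat.div_mul_cancel hndvd
      exact_mod_cast this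
    set M : ℤ := ((2 * d ^ 2 / n : ℕ) : ℤ) with hMdef
    -- A² M = 2 n t²
    have hA2M : A ^ 2 * M = 2 * n * t ^ 2 := by
      have : (n : ℤ) * (A ^ 2 * M) = (n : ℤ) * (2 * n * t ^ 2) := by
        linear_combination A ^ 2 * hMn + 2 * ((d : ℤ) * A + n * t) * ht
      exact mul_left_cancel₀ hn0 this
    have hdiv : B ^ 2 - A ^ 2 = 2 * n * (t ^ 2 * m + ℓ * k * t + s * k ^ 2) := by
      linear_combination (B + A * ℓ + (d : ℤ) * k) * hk + A ^ 2 * hm + m * hA2M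
        + 2 * ℓ * k * ht + k ^ 2 * hs
    set j : ℤ := t ^ 2 * m + ℓ * k * t + s * k ^ 2
    have hC : (B : ℂ) ^ 2 = (A : ℂ) ^ 2 + 2 * n * (j : ℂ) := by
      have : (B ^ 2 : ℤ) = A ^ 2 + 2 * n * j := by linarith [hdiv]
      exact_mod_cast congrArg (Int.cast : ℤ → ℂ) this
    have harg : (Real.pi : ℂ) * Complex.I * ((B : ℂ) ^ 2) / n
        = (Real.pi : ℂ) * Complex.I * ((A : ℂ) ^ 2) / n + (j : ℂ) * (2 * Real.pi * Complex.I) := by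
      field_simp
      linear_combination hC
    rw [show ((b.val : ℂ)) = (B : ℂ) by push_cast [hB]; ring,
        show ((a.val : ℂ)) = (A : ℂ) by push_cast [hA]; ring,
        harg, Complex.exp_add, Complex.exp_int_mul_two_pi_mul_I, mul_one]
  ext a b
  rw [hT, Matrix.mul_diagonal, Matrix.diagonal_mul]
  simp only [Btilde]
  split_ifs with h
  · rw [key a b h.1 h.2]; ring
  · ring
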